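/- The reverse of the quantifier-elimination rewrite relation → on formulas is well-founded; in particular, → is terminating: there is no infinite sequence F₀ → F₁ → F₂ → … of rewrite steps. -/
import Mathlib


mutual
  /-- Terms of first-order logic extended with Hilbert's ε-operator,
  in de Bruijn representation (so formulas are automatically identified up
  to renaming of bound variables). -/
  inductive Tm : Type
    | var : ℕ → Tm
    | fn : ℕ → (k : ℕ) → (Fin k → Tm) → Tm
    | eps : Fm → Tm
  /-- Formulas; `ex F`, `all F` and `Tm.eps F` bind de Bruijn index 0 of `F`. -/
  inductive Fm : Type
    | pred : ℕ → (k : ℕ) → (Fin k → Tm) → Fm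
    | not : Fm → Fm
    | or : Fm → Fm → Fm
    | and : Fm → Fm → Fm
    | imp : Fm → Fm → Fm
    | ex : Fm → Fm
    | all : Fm → Fm
end

/-- Lifting a renaming under a binder. -/
def upRen (r : ℕ → ℕ) : ℕ → ℕ
  | 0 => 0
  | n + 1 => r n + 1

mutual
  /-- Renaming of free variables in a term. -/
  def renT (r : ℕ → ℕ) : Tm → Tm
    | .var i => .var (r i)
    | .fn f k a => .fn f k (fun i => renT r (a i))
    | .eps F => .eps (renF (upRen r) F)
  /-- Renaming of free variables in a formula. -/
  def renF (r : ℕ → ℕ) : Fm → Fm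
    | .pred p k a => .pred p k (fun i => renT r (a i))
    | .not F => .not (renF r F)
    | .or F G => .or (renF r F) (renF r G)
    | .and F G => .and (renF r F) (renF r G)
    | .imp F G => .imp (renF r F) (renF r G)
    | .ex F => .ex (renF (upRen r) F)
    | .all F => .all (renF (upRen r) F)
end

/-- Lifting a substitution under a binder. -/
def upSub (σ : ℕ → Tm) : ℕ → Tm
  | 0 => .var 0
  | n + 1 => renT Nat.succ (σ n)

mutual
  /-- Capture-avoiding simultaneous substitution on terms. -/
  def subT (σ : ℕ → Tm) : Tm → Tm
    | .var i => σ i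
    | .fn f k a => .fn f k (fun i => subT σ (a i))
    | .eps F => .eps (subF (upSub σ) F)
  /-- Capture-avoiding simultaneous substitution on formulas. -/
  def subF (σ : ℕ → Tm) : Fm → Fm
    | .pred p k a => .pred p k (fun i => subT σ (a i))
    | .not F => .not (subF σ F)
    | .or F G => .or (subF σ F) (subF σ G)
    | .and F G => .and (subF σ F) (subF σ G)
    | .imp F G => .imp (subF σ F) (subF σ G)
    | .ex F => .ex (subF (upSub σ) F)
    | .all F => .all (subF (upSub σ) F)
end

/-- `inst1 F t` is `F{x ↦ t}` for the variable `x` bound just outside `F`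
(de Bruijn index 0). -/
def inst1 (F : Fm) (t : Tm) : Fm :=
  subF (fun n => match n with | 0 => t | n + 1 => .var n) F

mutual
  /-- The variable with de Bruijn index `n` occurs free in the term. -/
  def freeT (n : ℕ) : Tm → Prop
    | .var i => i = n
    | .fn _ _ a => ∃ i, freeT n (a i)
    | .eps F => freeF (n + 1) F
  /-- The variable with de Bruijn index `n` occurs free in the formula. -/
  def freeF (n : ℕ) : Fm → Prop
    | .pred _ _ a => ∃ i, freeT n (a i)
    | .not F => freeF n F
    | .or F G => freeF n F ∨ freeF n G
    | .and F G => freeF n F ∨ freeF n G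
    | .imp F G => freeF n F ∨ freeF n G
    | .ex F => freeF (n + 1) F
    | .all F => freeF (n + 1) F
end

mutual
  /-- Number of occurrences of quantifiers (∃ and ∀, but not ε) in a term. -/
  def qcT : Tm → ℕ
    | .var _ => 0
    | .fn _ _ a => ∑ i, qcT (a i)
    | .eps F => qcF F
  /-- Number of occurrences of quantifiers (∃ and ∀, but not ε) in a formula. -/
  def qcF : Fm → ℕ
    | .pred _ _ a => ∑ i, qcT (a i)
    | .not F => qcF F
    | .or F G => qcF F + qcF G
    | .and F G => qcF F + qcF G
    | .imp F G => qcF F + qcF G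
    | .ex F => qcF F + 1
    | .all F => qcF F + 1
end

/-- Quantifier symbols. -/
inductive Quant : Type
  | ex
  | all

/-- `mkQ Q A` is the quantified formula `Qx. A`. -/
def mkQ : Quant → Fm → Fm
  | .ex, A => .ex A
  | .all, A => .all A

/-- `negQ Q A` is `¬^Q A`: `¬A` for `Q = ∀` and `A` for `Q = ∃`. -/
def negQ : Quant → Fm → Fm
  | .ex, A => A
  | .all, A => .not A

/-- `qeRedex Q A` is `A{x ↦ εx. ¬^Q A}`, the contractum of the redex `Qx. A`. -/
def qeRedex (Q : Quant) (A : Fm) : Fm := inst1 A (.eps (negQ Q A))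

mutual
  /-- One rewrite step inside a term, where each rewritten quantified subformula
  `Qx. A` is required to satisfy the side condition `P A`. -/
  inductive StepT (P : Fm → Prop) : Tm → Tm → Prop
    | fn {f k} {a : Fin k → Tm} {j : Fin k} {t' : Tm} :
        StepT P (a j) t' → StepT P (.fn f k a) (.fn f k (Function.update a j t'))
    | eps {F F'} : StepF P F F' → StepT P (.eps F) (.eps F')
  /-- One rewrite step on formulas: replace one occurrence of a subformula
  `Qx. A` (with `P A`) by `A{x ↦ εx. ¬^Q A}`. -/
  inductive StepF (P : Fm → Prop) : Fm → Fm → Prop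
    | root {Q A} : P A → StepF P (mkQ Q A) (qeRedex Q A)
    | pred {p k} {a : Fin k → Tm} {j : Fin k} {t' : Tm} :
        StepT P (a j) t' → StepF P (.pred p k a) (.pred p k (Function.update a j t'))
    | not {F F'} : StepF P F F' → StepF P (.not F) (.not F')
    | orL {F F' G} : StepF P F F' → StepF P (.or F G) (.or F' G)
    | orR {F G G'} : StepF P G G' → StepF P (.or F G) (.or F G')
    | andL {F F' G} : StepF P F F' → StepF P (.and F G) (.and F' G)
    | andR {F G G'} : StepF P G G' → StepF P (.and F G) (.and F G')
    | impL {F F' G} : StepF P F F' → StepF P (.imp F G) (.imp F' G)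
    | impR {F G G'} : StepF P G G' → StepF P (.imp F G) (.imp F G')
    | ex {F F'} : StepF P F F' → StepF P (.ex F) (.ex F')
    | all {F F'} : StepF P F F' → StepF P (.all F) (.all F')
end

/-- The quantifier-elimination rewrite relation `→` on formulas. -/
def Step : Fm → Fm → Prop := StepF (fun _ => True)

/-- `→₀`: the steps rewriting a vacuous quantifier (bound variable not free in the body). -/
def Step0 : Fm → Fm → Prop := StepF (fun A => ¬ freeF 0 A)

/-- `→₁`: the steps rewriting a non-vacuous quantifier. -/
def Step1 : Fm → Fm → Prop := StepF (fun A => freeF 0 A)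

/-- `→ℐ`: the innermost steps, whose rewritten subformula `Qx. A` contains no
quantifier other than the outermost `Q`. -/
def StepI : Fm → Fm → Prop := StepF (fun A => qcF A = 0)

/-! ### A strictly decreasing weight -/

/-- Extend a valuation under a binder. -/
def vcons (v : ℕ) (ν : ℕ → ℕ) : ℕ → ℕ
  | 0 => v
  | n + 1 => ν n

mutual
  /-- Weight of a term under a valuation of free variables. -/
  def WT : Tm → (ℕ → ℕ) → ℕ
    | .var i, ν => ν i
    | .fn _ _ a, ν => ∑ i, WT (a i) ν
    | .eps F, ν => WF' F (vcons 0 ν)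
  /-- Weight of a formula under a valuation of free variables. -/
  def WF' : Fm → (ℕ → ℕ) → ℕ
    | .pred _ _ a, ν => ∑ i, WT (a i) ν
    | .not F, ν => WF' F ν
    | .or F G, ν => WF' F ν + WF' G ν
    | .and F G, ν => WF' F ν + WF' G ν
    | .imp F G, ν => WF' F ν + WF' G ν
    | .ex F, ν => WF' F (vcons (WF' F (vcons 0 ν)) ν) + 1
    | .all F, ν => WF' F (vcons (WF' F (vcons 0 ν)) ν) + 1
end


theorem vcons_comp_upRen (v : ℕ) (ν r : ℕ → ℕ) :
    vcons v ν ∘ upRen r = vcons v (ν ∘ r) := by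
  funext n; cases n <;> rfl

mutual
  theorem renT_W : ∀ (t : Tm) (r ν : ℕ → ℕ), WT (renT r t) ν = WT t (ν ∘ r)
    | .var _, _, _ => rfl
    | .fn f k a, r, ν => by
        simp only [renT, WT]
        exact Finset.sum_congr rfl fun i _ => renT_W (a i) r ν
    | .eps F, r, ν => by
        simp only [renT, WT]
        rw [renF_W F (upRen r) (vcons 0 ν), vcons_comp_upRen]
  theorem renF_W : ∀ (F : Fm) (r ν : ℕ → ℕ), WF' (renF r F) ν = WF' F (ν ∘ r)
    | .pred p k a, r, ν => by
        simp only [renF, WF']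
        exact Finset.sum_congr rfl fun i _ => renT_W (a i) r ν
    | .not F, r, ν => by simp only [renF, WF']; exact renF_W F r ν
    | .or F G, r, ν => by simp only [renF, WF']; rw [renF_W F r ν, renF_W G r ν]
    | .and F G, r, ν => by simp only [renF, WF']; rw [renF_W F r ν, renF_W G r ν]
    | .imp F G, r, ν => by simp only [renF, WF']; rw [renF_W F r ν, renF_W G r ν]
    | .ex F, r, ν => by
        simp only [renF, WF']
        rw [renF_W F (upRen r) (vcons 0 ν), vcons_comp_upRen,
          renF_W F (upRen r), vcons_comp_upRen]
    | .all F, r, ν => by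
        simp only [renF, WF']
        rw [renF_W F (upRen r) (vcons 0 ν), vcons_comp_upRen,
          renF_W F (upRen r), vcons_comp_upRen]
end

theorem upSub_W (σ : ℕ → Tm) (v : ℕ) (ν : ℕ → ℕ) :
    (fun n => WT (upSub σ n) (vcons v ν)) = vcons v (fun n => WT (σ n) ν) := by
  funext n
  cases n with
  | zero => rfl
  | succ n =>
      show WT (renT Nat.succ (σ n)) (vcons v ν) = WT (σ n) ν
      rw [renT_W]
      rfl

mutual
  theorem subT_W : ∀ (t : Tm) (σ : ℕ → Tm) (ν : ℕ → ℕ),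
      WT (subT σ t) ν = WT t (fun n => WT (σ n) ν)
    | .var _, _, _ => rfl
    | .fn f k a, σ, ν => by
        simp only [subT, WT]
        exact Finset.sum_congr rfl fun i _ => subT_W (a i) σ ν
    | .eps F, σ, ν => by
        simp only [subT, WT]
        rw [subF_W F (upSub σ) (vcons 0 ν), upSub_W]
  theorem subF_W : ∀ (F : Fm) (σ : ℕ → Tm) (ν : ℕ → ℕ),
      WF' (subF σ F) ν = WF' F (fun n => WT (σ n) ν)
    | .pred p k a, σ, ν => by
        simp only [subF, WF']
        exact Finset.sum_congr rfl fun i _ => subT_W (a i) σ ν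
    | .not F, σ, ν => by simp only [subF, WF']; exact subF_W F σ ν
    | .or F G, σ, ν => by simp only [subF, WF']; rw [subF_W F σ ν, subF_W G σ ν]
    | .and F G, σ, ν => by simp only [subF, WF']; rw [subF_W F σ ν, subF_W G σ ν]
    | .imp F G, σ, ν => by simp only [subF, WF']; rw [subF_W F σ ν, subF_W G σ ν]
    | .ex F, σ, ν => by
        simp only [subF, WF']
        rw [subF_W F (upSub σ) (vcons 0 ν), upSub_W,
          subF_W F (upSub σ), upSub_W]
    | .all F, σ, ν => by
        simp only [subF, WF']
        rw [subF_W F (upSub σ) (vcons 0 ν), upSub_W,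
          subF_W F (upSub σ), upSub_W]
end

theorem vcons_mono {v w : ℕ} {ν μ : ℕ → ℕ} (hv : v ≤ w) (h : ∀ n, ν n ≤ μ n) :
    ∀ n, vcons v ν n ≤ vcons w μ n := by
  intro n; cases n; exacts [hv, h _]

mutual
  theorem WT_mono : ∀ (t : Tm) {ν μ : ℕ → ℕ}, (∀ n, ν n ≤ μ n) → WT t ν ≤ WT t μ
    | .var i, _, _, h => h i
    | .fn f k a, _, _, h => Finset.sum_le_sum fun i _ => WT_mono (a i) h
    | .eps F, _, _, h => WF'_mono F (vcons_mono le_rfl h)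
  theorem WF'_mono : ∀ (F : Fm) {ν μ : ℕ → ℕ}, (∀ n, ν n ≤ μ n) → WF' F ν ≤ WF' F μ
    | .pred p k a, _, _, h => Finset.sum_le_sum fun i _ => WT_mono (a i) h
    | .not F, _, _, h => WF'_mono F h
    | .or F G, _, _, h => Nat.add_le_add (WF'_mono F h) (WF'_mono G h)
    | .and F G, _, _, h => Nat.add_le_add (WF'_mono F h) (WF'_mono G h)
    | .imp F G, _, _, h => Nat.add_le_add (WF'_mono F h) (WF'_mono G h)
    | .ex F, _, _, h =>
        Nat.add_le_add_right
          (WF'_mono F (vcons_mono (WF'_mono F (vcons_mono le_rfl h)) h)) 1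
    | .all F, _, _, h =>
        Nat.add_le_add_right
          (WF'_mono F (vcons_mono (WF'_mono F (vcons_mono le_rfl h)) h)) 1
end

theorem negQ_W (Q : Quant) (A : Fm) (ν : ℕ → ℕ) : WF' (negQ Q A) ν = WF' A ν := by
  cases Q <;> rfl

theorem mkQ_W (Q : Quant) (A : Fm) (ν : ℕ → ℕ) :
    WF' (mkQ Q A) ν = WF' A (vcons (WF' A (vcons 0 ν)) ν) + 1 := by
  cases Q <;> rfl

theorem qeRedex_W (Q : Quant) (A : Fm) (ν : ℕ → ℕ) :
    WF' (qeRedex Q A) ν = WF' A (vcons (WF' A (vcons 0 ν)) ν) := by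
  show WF' (subF _ A) ν = _
  rw [subF_W]
  congr 1
  funext n
  cases n with
  | zero => exact negQ_W Q A (vcons 0 ν)
  | succ n => rfl

theorem qeRedex_lt (Q : Quant) (A : Fm) (ν : ℕ → ℕ) :
    WF' (qeRedex Q A) ν < WF' (mkQ Q A) ν := by
  rw [mkQ_W, qeRedex_W]
  exact Nat.lt_succ_self _

mutual
  theorem stepT_lt {P : Fm → Prop} : ∀ {t t' : Tm}, StepT P t t' → ∀ ν, WT t' ν < WT t ν
    | _, _, .fn (a := a) (j := j) (t' := t') h, ν => by
        simp only [WT]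
        refine Finset.sum_lt_sum (fun i _ => ?_) ⟨j, Finset.mem_univ j, ?_⟩
        · by_cases hij : i = j
          · subst hij
            rw [Function.update_self]
            exact (stepT_lt h ν).le
          · rw [Function.update_of_ne hij]
        · rw [Function.update_self]
          exact stepT_lt h ν
    | _, _, .eps h, ν => stepF_lt h (vcons 0 ν)
  theorem stepF_lt {P : Fm → Prop} : ∀ {F F' : Fm}, StepF P F F' → ∀ ν, WF' F' ν < WF' F ν
    | _, _, .root (Q := Q) (A := A) _, ν => qeRedex_lt Q A ν
    | _, _, .pred (a := a) (j := j) (t' := t') h, ν => by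
        simp only [WF']
        refine Finset.sum_lt_sum (fun i _ => ?_) ⟨j, Finset.mem_univ j, ?_⟩
        · by_cases hij : i = j
          · subst hij
            rw [Function.update_self]
            exact (stepT_lt h ν).le
          · rw [Function.update_of_ne hij]
        · rw [Function.update_self]
          exact stepT_lt h ν
    | _, _, .not h, ν => stepF_lt h ν
    | _, _, .orL h, ν => Nat.add_lt_add_right (stepF_lt h ν) _
    | _, _, .orR h, ν => Nat.add_lt_add_left (stepF_lt h ν) _
    | _, _, .andL h, ν => Nat.add_lt_add_right (stepF_lt h ν) _
    | _, _, .andR h, ν => Nat.add_lt_add_left (stepF_lt h ν) _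
    | _, _, .impL h, ν => Nat.add_lt_add_right (stepF_lt h ν) _
    | _, _, .impR h, ν => Nat.add_lt_add_left (stepF_lt h ν) _
    | _, _, .ex (F := F) (F' := F') h, ν => by
        simp only [WF']
        refine Nat.add_lt_add_right (lt_of_le_of_lt ?_ (stepF_lt h _)) 1
        exact WF'_mono F' (vcons_mono (stepF_lt h (vcons 0 ν)).le fun _ => le_rfl)
    | _, _, .all (F := F) (F' := F') h, ν => by
        simp only [WF']
        refine Nat.add_lt_add_right (lt_of_le_of_lt ?_ (stepF_lt h _)) 1
        exact WF'_mono F' (vcons_mono (stepF_lt h (vcons 0 ν)).le fun _ => le_rfl)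
end


/-- the paper's main termination theorem: the reverse of the
quantifier-elimination rewrite relation `→` is well-founded; in particular `→`
is terminating. -/
theorem stmt12 :
    WellFounded (fun G F : Fm => Step F G) ∧
    ¬ ∃ f : ℕ → Fm, ∀ i : ℕ, Step (f i) (f (i + 1)) := by
  have hd : ∀ {F G : Fm}, Step F G → WF' G (fun _ => 0) < WF' F (fun _ => 0) :=
    fun h => stepF_lt h _
  refine ⟨Subrelation.wf (fun h => hd h)
    (InvImage.wf (fun F => WF' F fun _ => 0) Nat.lt_wfRel.wf), ?_⟩
  rintro ⟨f, hf⟩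
  have key : ∀ i, WF' (f i) (fun _ => 0) + i ≤ WF' (f 0) (fun _ => 0) := by
    intro i
    induction i with
    | zero => simp
    | succ i ih => have := hd (hf i); omega
  have := key (WF' (f 0) (fun _ => 0) + 1)
  omega
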